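/- arXiv:2403.12460 — 2 statements merged into one kernel-verified Lean document; each statement's English description precedes it below -/
import Mathlib

section
/- In the dual formulation of SVRG with exact data, if x† - x₀ = A* λ† for some λ† ∈ Y, then the dual variables λ_n (with x_n = x₀ + A* λ_n) satisfy E[‖λ_{n+1} - λ†‖²] - E[‖λ_n - λ†‖²] ≤ -2γ₀ E[‖x_n - x†‖²] - (2γ₁/N) Σ_{k=0}^{m-1} E[‖x_{n,k} - x†‖²] + (2γ₁²/N) Σ_{k=0}^{m-1} E[‖A x_{n,k} - y‖²] + (γ₀² + 2mγ₁²/N) E[‖A x_n - y‖²]. -/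
open MeasureTheory ProbabilityTheory Filter
open scoped RealInnerProductSpace
noncomputable section

/-- The `ℓ²`-product of finitely many complete spaces is complete. -/
instance piLpCompleteSpace {N : ℕ} {Y : Fin N → Type*} [∀ i, NormedAddCommGroup (Y i)]
    [∀ i, CompleteSpace (Y i)] : CompleteSpace (PiLp 2 Y) :=
  inferInstance

/-- The stacked operator `A x = (A₁ x, …, A_N x)` into the `ℓ²`-product space. -/
def stackOp {N : ℕ} {X : Type*} [NormedAddCommGroup X] [InnerProductSpace ℝ X]
    {Y : Fin N → Type*} [∀ i, NormedAddCommGroup (Y i)] [∀ i, InnerProductSpace ℝ (Y i)]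
    (A : ∀ i, X →L[ℝ] Y i) : X →L[ℝ] PiLp 2 Y :=
  (PiLp.continuousLinearEquiv 2 ℝ Y).symm.toContinuousLinearMap.comp (ContinuousLinearMap.pi A)

def auxS (m n k : ℕ) : Finset (ℕ × ℕ) :=
  (Finset.range n ×ˢ Finset.range m) ∪ ({n} ×ˢ Finset.range k)

lemma auxS_mono {m n k k' : ℕ} (h : k ≤ k') : auxS m n k ⊆ auxS m n k' := by
  intro p hp
  simp only [auxS, Finset.mem_union, Finset.mem_product, Finset.mem_range,
    Finset.mem_singleton] at hp ⊢
  omega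

lemma auxS_succ_zero (m n : ℕ) : auxS m n m = auxS m (n + 1) 0 := by
  ext p
  simp only [auxS, Finset.mem_union, Finset.mem_product, Finset.mem_range,
    Finset.mem_singleton]
  omega

lemma not_mem_auxS (m n k : ℕ) : (n, k) ∉ auxS m n k := by
  simp only [auxS, Finset.mem_union, Finset.mem_product, Finset.mem_range,
    Finset.mem_singleton]
  omega

lemma mem_auxS_self (m n k : ℕ) (hk : k < m) : (n, k) ∈ auxS m n (k + 1) := by
  exact Finset.mem_union_right _ (Finset.mem_product.mpr
    ⟨Finset.mem_singleton_self n, Finset.mem_range.mpr (Nat.lt_succ_self k)⟩)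

def auxMask {Ω : Type*} {N : ℕ} (I : ℕ → ℕ → Ω → Fin N) (i0 : Fin N) (m n k : ℕ)
    (ω : Ω) : ℕ × ℕ → Fin N :=
  fun p => if p ∈ auxS m n k then I p.1 p.2 ω else i0

def auxRes {N : ℕ} (i0 : Fin N) (s : Finset (ℕ × ℕ)) (v : ℕ × ℕ → Fin N) :
    ℕ × ℕ → Fin N :=
  fun p => if p ∈ s then v p else i0

lemma auxMask_res {Ω : Type*} {N : ℕ} (I : ℕ → ℕ → Ω → Fin N) (i0 : Fin N)
    (m n k k' : ℕ) (h : k ≤ k') (ω : Ω) :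
    auxMask I i0 m n k ω = auxRes i0 (auxS m n k) (auxMask I i0 m n k' ω) := by
  funext p
  by_cases hp : p ∈ auxS m n k
  · simp [auxMask, auxRes, hp, auxS_mono h hp]
  · simp [auxMask, auxRes, hp]

section Aux
variable {N : ℕ} {X : Type*} [NormedAddCommGroup X] [InnerProductSpace ℝ X] [CompleteSpace X]
  {Y : Fin N → Type*} [∀ i, NormedAddCommGroup (Y i)] [∀ i, InnerProductSpace ℝ (Y i)]
  [∀ i, CompleteSpace (Y i)]

def auxXof (A : ∀ i, X →L[ℝ] Y i) (x₀ : X) (v : PiLp 2 Y) : X :=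
  x₀ + (ContinuousLinearMap.adjoint (stackOp A)) v

def auxMu (A : ∀ i, X →L[ℝ] Y i) (x₀ : X) (y : PiLp 2 Y) (i : Fin N) (lk ln : PiLp 2 Y) :
    PiLp 2 Y :=
  (WithLp.equiv 2 (∀ j, Y j)).symm fun j =>
    (if j = i then A j (auxXof A x₀ lk) - A j (auxXof A x₀ ln) else 0) +
      (N : ℝ)⁻¹ • (A j (auxXof A x₀ ln) - y j)

lemma auxMu_sum (hN : 0 < N) (A : ∀ i, X →L[ℝ] Y i) (x₀ : X) (y : PiLp 2 Y)
    (lk ln : PiLp 2 Y) :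
    ∑ j : Fin N, auxMu A x₀ y j lk ln = stackOp A (auxXof A x₀ lk) - y := by
  ext l
  rw [WithLp.ofLp_sum, Finset.sum_apply]
  simp only [auxMu, WithLp.equiv_symm_apply, PiLp.toLp_apply]
  rw [Finset.sum_add_distrib, Finset.sum_ite_eq, Finset.sum_const, if_pos (Finset.mem_univ l),
    Finset.card_univ, Fintype.card_fin, ← Nat.cast_smul_eq_nsmul ℝ, smul_smul,
    mul_inv_cancel₀ (by exact_mod_cast hN.ne' : (N : ℝ) ≠ 0), one_smul]
  show _ = A l (auxXof A x₀ lk) - y l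
  abel

lemma auxMu_normsum (hN : 0 < N) (A : ∀ i, X →L[ℝ] Y i) (x₀ : X) (y : PiLp 2 Y)
    (lk ln : PiLp 2 Y) :
    ∑ j : Fin N, ‖auxMu A x₀ y j lk ln‖ ^ 2 ≤
      2 * ‖stackOp A (auxXof A x₀ lk) - y‖ ^ 2 +
        2 * ‖stackOp A (auxXof A x₀ ln) - y‖ ^ 2 := by
  have hnorm : ∀ u : X, ‖stackOp A u - y‖ ^ 2 = ∑ l, ‖A l u - y l‖ ^ 2 := by
    intro u
    rw [PiLp.norm_sq_eq_of_L2]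
    rfl
  have ht0 : (0 : ℝ) < (N : ℝ)⁻¹ := by positivity
  have htN : (N : ℝ) * (N : ℝ)⁻¹ = 1 :=
    mul_inv_cancel₀ (by exact_mod_cast hN.ne' : (N : ℝ) ≠ 0)
  have ht1 : (N : ℝ)⁻¹ ≤ 1 := by
    rw [inv_le_one_iff₀]
    right; exact_mod_cast hN
  calc ∑ j : Fin N, ‖auxMu A x₀ y j lk ln‖ ^ 2
      = ∑ j : Fin N, ∑ l, ‖auxMu A x₀ y j lk ln l‖ ^ 2 :=
        Finset.sum_congr rfl fun j _ => PiLp.norm_sq_eq_of_L2 _ _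
    _ = ∑ l, ∑ j : Fin N, ‖auxMu A x₀ y j lk ln l‖ ^ 2 := Finset.sum_comm
    _ ≤ ∑ l, (2 * ‖A l (auxXof A x₀ lk) - y l‖ ^ 2 + 2 * ‖A l (auxXof A x₀ ln) - y l‖ ^ 2) := by
        refine Finset.sum_le_sum fun l _ => ?_
        set bl := A l (auxXof A x₀ lk) - y l with hbl
        set el := A l (auxXof A x₀ ln) - y l with hel
        have hcomp : ∀ j : Fin N, ‖auxMu A x₀ y j lk ln l‖ ^ 2 =
            (if l = j then ‖bl + ((N : ℝ)⁻¹ - 1) • el‖ ^ 2 - ‖(N : ℝ)⁻¹ • el‖ ^ 2 else 0) +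
              ‖(N : ℝ)⁻¹ • el‖ ^ 2 := by
          intro j
          simp only [auxMu, WithLp.equiv_symm_apply, PiLp.toLp_apply]
          by_cases h : l = j
          · rw [if_pos h, if_pos h]
            have he : A l (auxXof A x₀ lk) - A l (auxXof A x₀ ln) +
                (N : ℝ)⁻¹ • (A l (auxXof A x₀ ln) - y l) = bl + ((N : ℝ)⁻¹ - 1) • el := by
              rw [hbl, hel, sub_smul, one_smul]
              abel
            rw [he]
            ring
          · rw [if_neg h, if_neg h, zero_add, zero_add]
        rw [Finset.sum_congr rfl fun j _ => hcomp j, Finset.sum_add_distrib,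
          Finset.sum_ite_eq, if_pos (Finset.mem_univ l), Finset.sum_const,
          Finset.card_univ, Fintype.card_fin, nsmul_eq_mul]
        have h1 : ‖bl + ((N : ℝ)⁻¹ - 1) • el‖ ≤ ‖bl‖ + (1 - (N : ℝ)⁻¹) * ‖el‖ := by
          calc ‖bl + ((N : ℝ)⁻¹ - 1) • el‖ ≤ ‖bl‖ + ‖((N : ℝ)⁻¹ - 1) • el‖ := norm_add_le _ _
            _ = ‖bl‖ + (1 - (N : ℝ)⁻¹) * ‖el‖ := by
                rw [norm_smul, Real.norm_eq_abs, abs_of_nonpos (by linarith), neg_sub]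
        have h2 : ‖(N : ℝ)⁻¹ • el‖ = (N : ℝ)⁻¹ * ‖el‖ := by
          rw [norm_smul, Real.norm_eq_abs, abs_of_pos ht0]
        have hD2 : ‖bl + ((N : ℝ)⁻¹ - 1) • el‖ ^ 2 ≤ (‖bl‖ + (1 - (N : ℝ)⁻¹) * ‖el‖) ^ 2 := by
          have := norm_nonneg (bl + ((N : ℝ)⁻¹ - 1) • el)
          nlinarith [norm_nonneg bl, norm_nonneg el]
        rw [h2]
        nlinarith [sq_nonneg (‖bl‖ - (1 - (N : ℝ)⁻¹) * ‖el‖), norm_nonneg bl, norm_nonneg el,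
          mul_nonneg (le_of_lt ht0) (sq_nonneg ‖el‖),
          mul_nonneg (mul_nonneg (sub_nonneg.2 ht1) ht0.le) (sq_nonneg ‖el‖)]
    _ = 2 * ‖stackOp A (auxXof A x₀ lk) - y‖ ^ 2 + 2 * ‖stackOp A (auxXof A x₀ ln) - y‖ ^ 2 := by
        rw [hnorm, hnorm, Finset.mul_sum, Finset.mul_sum, ← Finset.sum_add_distrib]

lemma aux_inner (A : ∀ i, X →L[ℝ] Y i) (x₀ xdag : X) (y lamdag : PiLp 2 Y)
    (hsol : stackOp A xdag = y)
    (hsource : xdag - x₀ = (ContinuousLinearMap.adjoint (stackOp A)) lamdag)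
    (v : PiLp 2 Y) :
    ⟪v - lamdag, stackOp A (auxXof A x₀ v) - y⟫ = ‖auxXof A x₀ v - xdag‖ ^ 2 := by
  have h1 : stackOp A (auxXof A x₀ v) - y = stackOp A (auxXof A x₀ v - xdag) := by
    rw [map_sub, hsol]
  have h2 : auxXof A x₀ v - xdag = (ContinuousLinearMap.adjoint (stackOp A)) (v - lamdag) := by
    rw [map_sub, ← hsource]
    simp only [auxXof]
    abel
  rw [h1, ← ContinuousLinearMap.adjoint_inner_left, ← h2, real_inner_self_eq_norm_sq]

end Aux

-- integrability of composition with measurable map into finite discrete space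
lemma integrable_comp_finite {Ω α : Type*} [MeasurableSpace Ω] (P : Measure Ω)
    [IsFiniteMeasure P] [MeasurableSpace α] [MeasurableSingletonClass α] [Finite α]
    (Z : Ω → α) (hZ : Measurable Z) (g : α → ℝ) :
    Integrable (fun ω => g (Z ω)) P := by
  cases isEmpty_or_nonempty α with
  | inl h =>
    haveI : IsEmpty Ω := ⟨fun ω => (h.false (Z ω))⟩
    exact (integrable_zero _ _ _).congr (by
      filter_upwards with ω; exact (IsEmpty.false (α := Ω) ω).elim)
  | inr h =>
    haveI : Fintype α := Fintype.ofFinite α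
    have hg : Measurable g := measurable_of_countable g
    refine Integrable.mono' (integrable_const (Finset.univ.sup' ⟨Classical.arbitrary α, Finset.mem_univ _⟩ fun a => ‖g a‖)) ((hg.comp hZ).aestronglyMeasurable) ?_
    filter_upwards with ω
    exact Finset.le_sup' (fun a => ‖g a‖) (Finset.mem_univ (Z ω))

lemma master_expectation {Ω α : Type*} [MeasurableSpace Ω] (P : Measure Ω)
    [IsProbabilityMeasure P] {N : ℕ} (hN : 0 < N)
    [MeasurableSpace α] [MeasurableSingletonClass α] [Finite α]
    (U : Ω → Fin N) (Z : Ω → α) (hU : Measurable U) (hZ : Measurable Z)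
    (hind : IndepFun U Z P) (hu : ∀ j, P {ω | U ω = j} = 1 / N)
    (F : Fin N → α → ℝ) :
    ∫ ω, F (U ω) (Z ω) ∂P = (N : ℝ)⁻¹ * ∑ j : Fin N, ∫ ω, F j (Z ω) ∂P := by
  have hconv : ∀ ω, F (U ω) (Z ω)
      = ∑ j : Fin N, (if U ω = j then (1:ℝ) else 0) * F j (Z ω) := by
    intro ω
    rw [Finset.sum_eq_single (U ω)]
    · simp
    · intro b _ hb; simp [Ne.symm hb]
    · simp
  simp only [hconv]
  rw [integral_finset_sum]
  · have hterm : ∀ j : Fin N,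
        (∫ ω, (if U ω = j then (1:ℝ) else 0) * F j (Z ω) ∂P)
          = (N:ℝ)⁻¹ * ∫ ω, F j (Z ω) ∂P := by
      intro j
      have hindj : IndepFun (fun ω => if U ω = j then (1:ℝ) else 0)
          (fun ω => F j (Z ω)) P :=
        hind.comp (φ := fun i : Fin N => if i = j then (1:ℝ) else 0) (ψ := F j)
          (measurable_of_countable _) (measurable_of_countable _)
      have h1 : (∫ ω, (if U ω = j then (1:ℝ) else 0) ∂P) = (N:ℝ)⁻¹ := by
        have : (fun ω => if U ω = j then (1:ℝ) else 0)
            = Set.indicator {ω | U ω = j} (fun _ => (1:ℝ)) := by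
          funext ω; by_cases h : U ω = j <;> simp [h, Set.indicator_apply]
        rw [this, integral_indicator_const]
        · rw [measureReal_def, hu j]; simp [ENNReal.toReal_div]
        · exact hU (measurableSet_singleton j)
      calc (∫ ω, (if U ω = j then (1:ℝ) else 0) * F j (Z ω) ∂P)
          = (∫ ω, (if U ω = j then (1:ℝ) else 0) ∂P) * ∫ ω, F j (Z ω) ∂P := by
            exact hindj.integral_fun_mul_eq_mul_integral ((measurable_of_countable (fun i : Fin N => if i = j then (1:ℝ) else 0)).comp hU).aestronglyMeasurable ((measurable_of_countable (F j)).comp hZ).aestronglyMeasurable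
        _ = (N:ℝ)⁻¹ * ∫ ω, F j (Z ω) ∂P := by rw [h1]
    simp only [hterm]
    rw [Finset.mul_sum]
  · intro j _
    have : (fun ω => (if U ω = j then (1:ℝ) else 0) * F j (Z ω))
        = fun ω => (fun p : Fin N × α => (if p.1 = j then (1:ℝ) else 0) * F j p.2) (U ω, Z ω) := rfl
    rw [this]
    exact integrable_comp_finite P _ (hU.prodMk hZ)
      (fun p : Fin N × α => (if p.1 = j then (1:ℝ) else 0) * F j p.2)

/-- the dual SVRG descent inequality under the benchmark source
condition `x† - x₀ = A* λ†`. -/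
theorem svrg_dual_descent_inequality
    {Ω : Type*} [MeasurableSpace Ω] (P : Measure Ω) [IsProbabilityMeasure P]
    {X : Type*} [NormedAddCommGroup X] [InnerProductSpace ℝ X] [CompleteSpace X]
    {N : ℕ} (hN : 0 < N) {Y : Fin N → Type*}
    [∀ i, NormedAddCommGroup (Y i)] [∀ i, InnerProductSpace ℝ (Y i)]
    [∀ i, CompleteSpace (Y i)]
    (A : ∀ i, X →L[ℝ] Y i) (L : ℝ)
    (hL : IsGreatest (Set.range fun i => ‖A i‖) L)
    (m : ℕ) (hm : 0 < m) (γ₀ γ₁ : ℝ) (hγ₀ : 0 < γ₀) (hγ₁ : 0 < γ₁)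
    (I : ℕ → ℕ → Ω → Fin N) (hImeas : ∀ n k, Measurable (I n k))
    (hunif : ∀ n k j, P {ω | I n k ω = j} = 1 / N)
    (hindep : iIndepFun
      (fun (p : ℕ × ℕ) ω => I p.1 p.2 ω) P)
    -- exact data, solution and the source condition
    (x₀ : X) (y : PiLp 2 Y) (xdag : X) (hsol : stackOp A xdag = y)
    (lamdag : PiLp 2 Y)
    (hsource : xdag - x₀ = (ContinuousLinearMap.adjoint (stackOp A)) lamdag)
    -- the dual SVRG sequences and the induced primal iterates
    (lam : ℕ → Ω → PiLp 2 Y) (lamk : ℕ → ℕ → Ω → PiLp 2 Y)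
    (μ : ℕ → ℕ → Ω → PiLp 2 Y) (x : ℕ → Ω → X) (xk : ℕ → ℕ → Ω → X)
    (hlam0 : ∀ ω, lam 0 ω = 0)
    (hxdef : ∀ n ω, x n ω = x₀ + (ContinuousLinearMap.adjoint (stackOp A)) (lam n ω))
    (hxkdef : ∀ n k ω, xk n k ω = x₀ + (ContinuousLinearMap.adjoint (stackOp A)) (lamk n k ω))
    (hlamk0 : ∀ n ω, lamk n 0 ω = lam n ω - γ₀ • (stackOp A (x n ω) - y))
    (hμ : ∀ n k ω j, μ n k ω j =
      (if j = I n k ω then A j (xk n k ω) - A j (x n ω) else 0) +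
        ((N : ℝ)⁻¹) • (A j (x n ω) - y j))
    (hlamkk : ∀ n k ω, k < m → lamk n (k + 1) ω = lamk n k ω - γ₁ • μ n k ω)
    (hlamn : ∀ n ω, lam (n + 1) ω = lamk n m ω) :
    ∀ n : ℕ,
      (∫ ω, ‖lam (n + 1) ω - lamdag‖ ^ 2 ∂P) - ∫ ω, ‖lam n ω - lamdag‖ ^ 2 ∂P ≤
        -2 * γ₀ * ∫ ω, ‖x n ω - xdag‖ ^ 2 ∂P -
          (2 * γ₁ / (N : ℝ)) *
            ∑ k ∈ Finset.range m, ∫ ω, ‖xk n k ω - xdag‖ ^ 2 ∂P +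
          (2 * γ₁ ^ 2 / (N : ℝ)) *
            ∑ k ∈ Finset.range m, ∫ ω, ‖stackOp A (xk n k ω) - y‖ ^ 2 ∂P +
          (γ₀ ^ 2 + 2 * (m : ℝ) * γ₁ ^ 2 / (N : ℝ)) *
            ∫ ω, ‖stackOp A (x n ω) - y‖ ^ 2 ∂P := by
  have hNR : ((N : ℝ)) ≠ 0 := by exact_mod_cast hN.ne'
  set i0 : Fin N := ⟨0, hN⟩ with hi0
  -- μ expressed through auxMu
  have hμf : ∀ n k ω, μ n k ω = auxMu A x₀ y (I n k ω) (lamk n k ω) (lam n ω) := by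
    intro n k ω
    ext j
    rw [hμ n k ω j]
    simp only [auxMu, WithLp.equiv_symm_apply, PiLp.toLp_apply, auxXof]
    rw [← hxkdef, ← hxdef]
  -- representation of the dual iterates as functions of the index variables
  have hrepk : ∀ n, (∃ Gn : (ℕ × ℕ → Fin N) → PiLp 2 Y, ∀ ω, lam n ω = Gn (auxMask I i0 m n 0 ω)) → ∀ k, k ≤ m →
      ∃ G Gn : (ℕ × ℕ → Fin N) → PiLp 2 Y, (∀ ω, lamk n k ω = G (auxMask I i0 m n k ω)) ∧
        (∀ ω, lam n ω = Gn (auxMask I i0 m n k ω)) := by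
    intro n hn k hkm
    induction k with
    | zero =>
      obtain ⟨Gn, hGn⟩ := hn
      refine ⟨fun v => Gn v - γ₀ • (stackOp A (auxXof A x₀ (Gn v)) - y), Gn, fun ω => ?_, hGn⟩
      rw [hlamk0 n ω, hxdef n ω, hGn ω]
      simp only [auxXof]
    | succ k ih =>
      obtain ⟨G, Gn, hG, hGn⟩ := ih (Nat.le_of_succ_le hkm)
      refine ⟨fun v => G (auxRes i0 (auxS m n k) v) -
          γ₁ • auxMu A x₀ y (v (n, k)) (G (auxRes i0 (auxS m n k) v))
            (Gn (auxRes i0 (auxS m n k) v)),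
        fun v => Gn (auxRes i0 (auxS m n k) v), fun ω => ?_, fun ω => ?_⟩
      · have hres : auxRes i0 (auxS m n k) (auxMask I i0 m n (k + 1) ω) = auxMask I i0 m n k ω :=
          (auxMask_res I i0 m n k (k + 1) (Nat.le_succ k) ω).symm
        have hIval : auxMask I i0 m n (k + 1) ω (n, k) = I n k ω := by
          simp [auxMask, mem_auxS_self m n k (by omega)]
        beta_reduce
        rw [hlamkk n k ω (by omega), hμf n k ω]
        rw [hres, hIval, ← hG ω, ← hGn ω]
      · have hres : auxRes i0 (auxS m n k) (auxMask I i0 m n (k + 1) ω) = auxMask I i0 m n k ω :=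
          (auxMask_res I i0 m n k (k + 1) (Nat.le_succ k) ω).symm
        beta_reduce
        rw [hres, ← hGn ω]
  have hrep : ∀ n, ∃ Gn : (ℕ × ℕ → Fin N) → PiLp 2 Y, ∀ ω, lam n ω = Gn (auxMask I i0 m n 0 ω) := by
    intro n
    induction n with
    | zero => exact ⟨fun _ => 0, fun ω => hlam0 ω⟩
    | succ n ih =>
      obtain ⟨G, Gn, hG, -⟩ := hrepk n ih m le_rfl
      refine ⟨G, fun ω => ?_⟩
      have hmm : auxMask I i0 m n m ω = auxMask I i0 m (n + 1) 0 ω := by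
        funext p
        simp only [auxMask, auxS_succ_zero]
      rw [hlamn n ω, hG ω, hmm]
  intro n
  -- packaged representation over the tuple of indices in `auxS m n k`
  have pack : ∀ k, k ≤ m → ∃ (Φ Ψ : ((↥(auxS m n k)) → Fin N) → PiLp 2 Y),
      (∀ ω, lamk n k ω = Φ (fun q => I q.1.1 q.1.2 ω)) ∧
        (∀ ω, lam n ω = Ψ (fun q => I q.1.1 q.1.2 ω)) := by
    intro k hk
    obtain ⟨G, Gn, hG, hGn⟩ := hrepk n (hrep n) k hk
    refine ⟨fun v => G (fun p => if h : p ∈ auxS m n k then v ⟨p, h⟩ else i0),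
      fun v => Gn (fun p => if h : p ∈ auxS m n k then v ⟨p, h⟩ else i0),
      fun ω => ?_, fun ω => ?_⟩
    · rw [hG ω]
      congr 1
    · rw [hGn ω]
      congr 1
  -- uniform integrability helpers
  have intW : ∀ (k : ℕ) (g : ((↥(auxS m n k)) → Fin N) → ℝ),
      Integrable (fun ω => g (fun q => I q.1.1 q.1.2 ω)) P := fun k g =>
    integrable_comp_finite P _ (measurable_pi_lambda _ fun q => hImeas _ _) g
  have intWI : ∀ (k : ℕ) (g : Fin N × ((↥(auxS m n k)) → Fin N) → ℝ),
      Integrable (fun ω => g (I n k ω, fun q => I q.1.1 q.1.2 ω)) P := fun k g =>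
    integrable_comp_finite P _
      ((hImeas n k).prodMk (measurable_pi_lambda _ fun q => hImeas _ _)) g
  -- per-step inequality for the inner iterations
  have step : ∀ k, k < m →
      (∫ ω, ‖lamk n (k + 1) ω - lamdag‖ ^ 2 ∂P) - ∫ ω, ‖lamk n k ω - lamdag‖ ^ 2 ∂P ≤
        -(2 * γ₁ / (N : ℝ)) * ∫ ω, ‖xk n k ω - xdag‖ ^ 2 ∂P +
          (2 * γ₁ ^ 2 / (N : ℝ)) * ∫ ω, ‖stackOp A (xk n k ω) - y‖ ^ 2 ∂P +
          (2 * γ₁ ^ 2 / (N : ℝ)) * ∫ ω, ‖stackOp A (x n ω) - y‖ ^ 2 ∂P := by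
    intro k hk
    obtain ⟨Φ, Ψ, hΦ, hΨ⟩ := pack k (le_of_lt hk)
    have hWmeas : Measurable (fun ω (q : ↥(auxS m n k)) => I q.1.1 q.1.2 ω) :=
      measurable_pi_lambda _ fun q => hImeas _ _
    have hIW : IndepFun (I n k) (fun ω (q : ↥(auxS m n k)) => I q.1.1 q.1.2 ω) P := by
      have hdisj : Disjoint ({(n, k)} : Finset (ℕ × ℕ)) (auxS m n k) :=
        Finset.disjoint_singleton_left.mpr (not_mem_auxS m n k)
      have h2 := hindep.indepFun_finset {(n, k)} (auxS m n k) hdisj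
        (fun p => hImeas p.1 p.2)
      exact h2.comp
        (φ := fun v : ((↥({(n, k)} : Finset (ℕ × ℕ))) → Fin N) =>
          v ⟨(n, k), Finset.mem_singleton_self _⟩)
        (ψ := id) (measurable_pi_apply _) measurable_id
    -- expectation of the inner-product term
    have key1 : ∫ ω, ⟪lamk n k ω - lamdag, μ n k ω⟫ ∂P
        = (N : ℝ)⁻¹ * ∫ ω, ‖xk n k ω - xdag‖ ^ 2 ∂P := by
      have hmast := master_expectation P hN (I n k) (fun ω (q : ↥(auxS m n k)) => I q.1.1 q.1.2 ω)
        (hImeas n k) hWmeas hIW (hunif n k)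
        (fun j v => ⟪Φ v - lamdag, auxMu A x₀ y j (Φ v) (Ψ v)⟫)
      calc ∫ ω, ⟪lamk n k ω - lamdag, μ n k ω⟫ ∂P
          = ∫ ω, ⟪Φ (fun q : ↥(auxS m n k) => I q.1.1 q.1.2 ω) - lamdag,
              auxMu A x₀ y (I n k ω) (Φ (fun q : ↥(auxS m n k) => I q.1.1 q.1.2 ω))
                (Ψ (fun q : ↥(auxS m n k) => I q.1.1 q.1.2 ω))⟫ ∂P := by
            refine integral_congr_ae (Eventually.of_forall fun ω => ?_)
            beta_reduce
            rw [hμf n k ω, hΦ ω, hΨ ω]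
        _ = (N : ℝ)⁻¹ * ∑ j : Fin N, ∫ ω, ⟪Φ (fun q : ↥(auxS m n k) => I q.1.1 q.1.2 ω) - lamdag,
              auxMu A x₀ y j (Φ (fun q : ↥(auxS m n k) => I q.1.1 q.1.2 ω))
                (Ψ (fun q : ↥(auxS m n k) => I q.1.1 q.1.2 ω))⟫ ∂P := hmast
        _ = (N : ℝ)⁻¹ * ∫ ω, ∑ j : Fin N, ⟪Φ (fun q : ↥(auxS m n k) => I q.1.1 q.1.2 ω) - lamdag,
              auxMu A x₀ y j (Φ (fun q : ↥(auxS m n k) => I q.1.1 q.1.2 ω))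
                (Ψ (fun q : ↥(auxS m n k) => I q.1.1 q.1.2 ω))⟫ ∂P := by
            rw [← integral_finset_sum _ (fun j _ => intW k
              (fun v => ⟪Φ v - lamdag, auxMu A x₀ y j (Φ v) (Ψ v)⟫))]
        _ = (N : ℝ)⁻¹ * ∫ ω, ‖xk n k ω - xdag‖ ^ 2 ∂P := by
            congr 1
            refine integral_congr_ae (Eventually.of_forall fun ω => ?_)
            beta_reduce
            rw [← inner_sum, auxMu_sum hN A x₀ y, ← hΦ ω,
              aux_inner A x₀ xdag y lamdag hsol hsource (lamk n k ω), hxkdef n k ω]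
            rfl
    -- expectation of the squared-norm term
    have key2 : ∫ ω, ‖μ n k ω‖ ^ 2 ∂P
        ≤ (N : ℝ)⁻¹ * (2 * ∫ ω, ‖stackOp A (xk n k ω) - y‖ ^ 2 ∂P +
            2 * ∫ ω, ‖stackOp A (x n ω) - y‖ ^ 2 ∂P) := by
      have hmast := master_expectation P hN (I n k) (fun ω (q : ↥(auxS m n k)) => I q.1.1 q.1.2 ω)
        (hImeas n k) hWmeas hIW (hunif n k)
        (fun j v => ‖auxMu A x₀ y j (Φ v) (Ψ v)‖ ^ 2)
      have hstep1 : ∫ ω, ‖μ n k ω‖ ^ 2 ∂P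
          = (N : ℝ)⁻¹ * ∫ ω, (∑ j : Fin N,
              ‖auxMu A x₀ y j (Φ (fun q : ↥(auxS m n k) => I q.1.1 q.1.2 ω))
                (Ψ (fun q : ↥(auxS m n k) => I q.1.1 q.1.2 ω))‖ ^ 2) ∂P := by
        calc ∫ ω, ‖μ n k ω‖ ^ 2 ∂P
            = ∫ ω, ‖auxMu A x₀ y (I n k ω) (Φ (fun q : ↥(auxS m n k) => I q.1.1 q.1.2 ω))
                (Ψ (fun q : ↥(auxS m n k) => I q.1.1 q.1.2 ω))‖ ^ 2 ∂P := by
              refine integral_congr_ae (Eventually.of_forall fun ω => ?_)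
              beta_reduce
              rw [hμf n k ω, hΦ ω, hΨ ω]
          _ = (N : ℝ)⁻¹ * ∑ j : Fin N, ∫ ω,
                ‖auxMu A x₀ y j (Φ (fun q : ↥(auxS m n k) => I q.1.1 q.1.2 ω))
                  (Ψ (fun q : ↥(auxS m n k) => I q.1.1 q.1.2 ω))‖ ^ 2 ∂P := hmast
          _ = (N : ℝ)⁻¹ * ∫ ω, (∑ j : Fin N,
                ‖auxMu A x₀ y j (Φ (fun q : ↥(auxS m n k) => I q.1.1 q.1.2 ω))
                  (Ψ (fun q : ↥(auxS m n k) => I q.1.1 q.1.2 ω))‖ ^ 2) ∂P := by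
              rw [← integral_finset_sum _ (fun j _ => intW k
                (fun v => ‖auxMu A x₀ y j (Φ v) (Ψ v)‖ ^ 2))]
      rw [hstep1]
      have hmono : ∫ ω, (∑ j : Fin N,
            ‖auxMu A x₀ y j (Φ (fun q : ↥(auxS m n k) => I q.1.1 q.1.2 ω))
              (Ψ (fun q : ↥(auxS m n k) => I q.1.1 q.1.2 ω))‖ ^ 2) ∂P
          ≤ ∫ ω, (2 * ‖stackOp A (xk n k ω) - y‖ ^ 2 + 2 * ‖stackOp A (x n ω) - y‖ ^ 2) ∂P := by
        refine integral_mono (intW k (fun v => ∑ j : Fin N, ‖auxMu A x₀ y j (Φ v) (Ψ v)‖ ^ 2)) ?_ ?_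
        · exact ((intW k (fun v => 2 * ‖stackOp A (auxXof A x₀ (Φ v)) - y‖ ^ 2 +
            2 * ‖stackOp A (auxXof A x₀ (Ψ v)) - y‖ ^ 2))).congr
            (Eventually.of_forall fun ω => by
              beta_reduce
              rw [hxkdef n k ω, hxdef n ω, hΦ ω, hΨ ω]
              rfl)
        · intro ω
          beta_reduce
          have := auxMu_normsum hN A x₀ y (Φ (fun q : ↥(auxS m n k) => I q.1.1 q.1.2 ω))
            (Ψ (fun q : ↥(auxS m n k) => I q.1.1 q.1.2 ω))
          have hxk : stackOp A (xk n k ω) - y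
              = stackOp A (auxXof A x₀ (Φ (fun q : ↥(auxS m n k) => I q.1.1 q.1.2 ω))) - y := by
            rw [hxkdef n k ω, hΦ ω]; rfl
          have hx : stackOp A (x n ω) - y
              = stackOp A (auxXof A x₀ (Ψ (fun q : ↥(auxS m n k) => I q.1.1 q.1.2 ω))) - y := by
            rw [hxdef n ω, hΨ ω]; rfl
          rw [hxk, hx]
          exact this
      have hsplit2 : ∫ ω, (2 * ‖stackOp A (xk n k ω) - y‖ ^ 2 +
            2 * ‖stackOp A (x n ω) - y‖ ^ 2) ∂P
          = 2 * ∫ ω, ‖stackOp A (xk n k ω) - y‖ ^ 2 ∂P +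
            2 * ∫ ω, ‖stackOp A (x n ω) - y‖ ^ 2 ∂P := by
        have i1 : Integrable (fun ω => ‖stackOp A (xk n k ω) - y‖ ^ 2) P :=
          (intW k (fun v => ‖stackOp A (auxXof A x₀ (Φ v)) - y‖ ^ 2)).congr
            (Eventually.of_forall fun ω => by beta_reduce; rw [hxkdef n k ω, hΦ ω]; rfl)
        have i2 : Integrable (fun ω => ‖stackOp A (x n ω) - y‖ ^ 2) P :=
          (intW k (fun v => ‖stackOp A (auxXof A x₀ (Ψ v)) - y‖ ^ 2)).congr
            (Eventually.of_forall fun ω => by beta_reduce; rw [hxdef n ω, hΨ ω]; rfl)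
        rw [integral_add (i1.const_mul 2) (i2.const_mul 2), integral_const_mul,
          integral_const_mul]
      calc (N : ℝ)⁻¹ * ∫ ω, (∑ j : Fin N,
            ‖auxMu A x₀ y j (Φ (fun q : ↥(auxS m n k) => I q.1.1 q.1.2 ω))
              (Ψ (fun q : ↥(auxS m n k) => I q.1.1 q.1.2 ω))‖ ^ 2) ∂P
          ≤ (N : ℝ)⁻¹ * ∫ ω, (2 * ‖stackOp A (xk n k ω) - y‖ ^ 2 +
              2 * ‖stackOp A (x n ω) - y‖ ^ 2) ∂P :=
            mul_le_mul_of_nonneg_left hmono (by positivity)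
        _ = (N : ℝ)⁻¹ * (2 * ∫ ω, ‖stackOp A (xk n k ω) - y‖ ^ 2 ∂P +
              2 * ∫ ω, ‖stackOp A (x n ω) - y‖ ^ 2 ∂P) := by rw [hsplit2]
    -- pointwise expansion of the squared norm
    have hpt : ∀ ω, ‖lamk n (k + 1) ω - lamdag‖ ^ 2
        = ‖lamk n k ω - lamdag‖ ^ 2 - 2 * γ₁ * ⟪lamk n k ω - lamdag, μ n k ω⟫
          + γ₁ ^ 2 * ‖μ n k ω‖ ^ 2 := by
      intro ω
      have h1 : lamk n (k + 1) ω - lamdag = (lamk n k ω - lamdag) - γ₁ • μ n k ω := by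
        rw [hlamkk n k ω hk]; abel
      rw [h1, norm_sub_sq_real, real_inner_smul_right, norm_smul, Real.norm_eq_abs,
        abs_of_pos hγ₁]
      ring
    have hInt1 : Integrable (fun ω => ‖lamk n k ω - lamdag‖ ^ 2) P :=
      (intW k (fun v => ‖Φ v - lamdag‖ ^ 2)).congr
        (Eventually.of_forall fun ω => by beta_reduce; rw [hΦ ω])
    have hInt2 : Integrable (fun ω => ⟪lamk n k ω - lamdag, μ n k ω⟫) P :=
      (intWI k (fun p => ⟪Φ p.2 - lamdag, auxMu A x₀ y p.1 (Φ p.2) (Ψ p.2)⟫)).congr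
        (Eventually.of_forall fun ω => by beta_reduce; rw [hμf n k ω, hΦ ω, hΨ ω])
    have hInt3 : Integrable (fun ω => ‖μ n k ω‖ ^ 2) P :=
      (intWI k (fun p => ‖auxMu A x₀ y p.1 (Φ p.2) (Ψ p.2)‖ ^ 2)).congr
        (Eventually.of_forall fun ω => by beta_reduce; rw [hμf n k ω, hΦ ω, hΨ ω])
    have hIcomb : ∫ ω, ‖lamk n (k + 1) ω - lamdag‖ ^ 2 ∂P
        = (∫ ω, ‖lamk n k ω - lamdag‖ ^ 2 ∂P)
          - 2 * γ₁ * (∫ ω, ⟪lamk n k ω - lamdag, μ n k ω⟫ ∂P)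
          + γ₁ ^ 2 * ∫ ω, ‖μ n k ω‖ ^ 2 ∂P := by
      calc ∫ ω, ‖lamk n (k + 1) ω - lamdag‖ ^ 2 ∂P
          = ∫ ω, (‖lamk n k ω - lamdag‖ ^ 2 - 2 * γ₁ * ⟪lamk n k ω - lamdag, μ n k ω⟫
              + γ₁ ^ 2 * ‖μ n k ω‖ ^ 2) ∂P :=
            integral_congr_ae (Eventually.of_forall hpt)
        _ = _ := by
            have hsubInt : Integrable (fun ω => ‖lamk n k ω - lamdag‖ ^ 2
                - 2 * γ₁ * ⟪lamk n k ω - lamdag, μ n k ω⟫) P :=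
              hInt1.sub (hInt2.const_mul (2 * γ₁))
            have hmulInt : Integrable (fun ω => γ₁ ^ 2 * ‖μ n k ω‖ ^ 2) P :=
              hInt3.const_mul (γ₁ ^ 2)
            have hmulInt2 : Integrable (fun ω => 2 * γ₁ * ⟪lamk n k ω - lamdag, μ n k ω⟫) P :=
              hInt2.const_mul (2 * γ₁)
            rw [integral_add hsubInt hmulInt, integral_sub hInt1 hmulInt2, integral_const_mul,
              integral_const_mul]
    rw [hIcomb, key1]
    have h3 : γ₁ ^ 2 * ∫ ω, ‖μ n k ω‖ ^ 2 ∂P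
        ≤ γ₁ ^ 2 * ((N : ℝ)⁻¹ * (2 * ∫ ω, ‖stackOp A (xk n k ω) - y‖ ^ 2 ∂P +
            2 * ∫ ω, ‖stackOp A (x n ω) - y‖ ^ 2 ∂P)) :=
      mul_le_mul_of_nonneg_left key2 (sq_nonneg γ₁)
    have e1 : (2 * γ₁ / (N : ℝ)) * ∫ ω, ‖xk n k ω - xdag‖ ^ 2 ∂P
        = 2 * γ₁ * ((N : ℝ)⁻¹ * ∫ ω, ‖xk n k ω - xdag‖ ^ 2 ∂P) := by ring
    have e2 : γ₁ ^ 2 * ((N : ℝ)⁻¹ * (2 * ∫ ω, ‖stackOp A (xk n k ω) - y‖ ^ 2 ∂P +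
          2 * ∫ ω, ‖stackOp A (x n ω) - y‖ ^ 2 ∂P))
        = (2 * γ₁ ^ 2 / (N : ℝ)) * ∫ ω, ‖stackOp A (xk n k ω) - y‖ ^ 2 ∂P +
          (2 * γ₁ ^ 2 / (N : ℝ)) * ∫ ω, ‖stackOp A (x n ω) - y‖ ^ 2 ∂P := by ring
    linarith [h3, e1, e2]
  -- the k = 0 (full-gradient) step: exact identity
  obtain ⟨Φ0, Ψ0, hΦ0, hΨ0⟩ := pack 0 (Nat.zero_le m)
  have step0 : ∫ ω, ‖lamk n 0 ω - lamdag‖ ^ 2 ∂P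
      = (∫ ω, ‖lam n ω - lamdag‖ ^ 2 ∂P) - 2 * γ₀ * (∫ ω, ‖x n ω - xdag‖ ^ 2 ∂P)
        + γ₀ ^ 2 * ∫ ω, ‖stackOp A (x n ω) - y‖ ^ 2 ∂P := by
    have hpt : ∀ ω, ‖lamk n 0 ω - lamdag‖ ^ 2
        = ‖lam n ω - lamdag‖ ^ 2 - 2 * γ₀ * ‖x n ω - xdag‖ ^ 2
          + γ₀ ^ 2 * ‖stackOp A (x n ω) - y‖ ^ 2 := by
      intro ω
      have h1 : lamk n 0 ω - lamdag = (lam n ω - lamdag) - γ₀ • (stackOp A (x n ω) - y) := by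
        rw [hlamk0 n ω]; abel
      have h2 : ⟪lam n ω - lamdag, stackOp A (x n ω) - y⟫ = ‖x n ω - xdag‖ ^ 2 := by
        have hax : x n ω = auxXof A x₀ (lam n ω) := hxdef n ω
        rw [hax]
        exact aux_inner A x₀ xdag y lamdag hsol hsource (lam n ω)
      rw [h1, norm_sub_sq_real, real_inner_smul_right, h2, norm_smul, Real.norm_eq_abs,
        abs_of_pos hγ₀]
      ring
    have hInt1 : Integrable (fun ω => ‖lam n ω - lamdag‖ ^ 2) P :=
      (intW 0 (fun v => ‖Ψ0 v - lamdag‖ ^ 2)).congr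
        (Eventually.of_forall fun ω => by beta_reduce; rw [hΨ0 ω])
    have hInt2 : Integrable (fun ω => ‖x n ω - xdag‖ ^ 2) P :=
      (intW 0 (fun v => ‖auxXof A x₀ (Ψ0 v) - xdag‖ ^ 2)).congr
        (Eventually.of_forall fun ω => by beta_reduce; rw [hxdef n ω, hΨ0 ω]; rfl)
    have hInt3 : Integrable (fun ω => ‖stackOp A (x n ω) - y‖ ^ 2) P :=
      (intW 0 (fun v => ‖stackOp A (auxXof A x₀ (Ψ0 v)) - y‖ ^ 2)).congr
        (Eventually.of_forall fun ω => by beta_reduce; rw [hxdef n ω, hΨ0 ω]; rfl)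
    calc ∫ ω, ‖lamk n 0 ω - lamdag‖ ^ 2 ∂P
        = ∫ ω, (‖lam n ω - lamdag‖ ^ 2 - 2 * γ₀ * ‖x n ω - xdag‖ ^ 2
            + γ₀ ^ 2 * ‖stackOp A (x n ω) - y‖ ^ 2) ∂P :=
          integral_congr_ae (Eventually.of_forall hpt)
      _ = _ := by
          have hsubInt : Integrable (fun ω => ‖lam n ω - lamdag‖ ^ 2
              - 2 * γ₀ * ‖x n ω - xdag‖ ^ 2) P :=
            hInt1.sub (hInt2.const_mul (2 * γ₀))
          have hmulInt : Integrable (fun ω => γ₀ ^ 2 * ‖stackOp A (x n ω) - y‖ ^ 2) P :=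
            hInt3.const_mul (γ₀ ^ 2)
          have hmulInt2 : Integrable (fun ω => 2 * γ₀ * ‖x n ω - xdag‖ ^ 2) P :=
            hInt2.const_mul (2 * γ₀)
          rw [integral_add hsubInt hmulInt, integral_sub hInt1 hmulInt2, integral_const_mul,
            integral_const_mul]
  -- assemble
  have hEnd : ∫ ω, ‖lam (n + 1) ω - lamdag‖ ^ 2 ∂P = ∫ ω, ‖lamk n m ω - lamdag‖ ^ 2 ∂P := by
    refine integral_congr_ae (Eventually.of_forall fun ω => ?_)
    beta_reduce
    rw [hlamn n ω]
  have htel : (∫ ω, ‖lamk n m ω - lamdag‖ ^ 2 ∂P) - ∫ ω, ‖lamk n 0 ω - lamdag‖ ^ 2 ∂P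
      = ∑ k ∈ Finset.range m, ((∫ ω, ‖lamk n (k + 1) ω - lamdag‖ ^ 2 ∂P)
          - ∫ ω, ‖lamk n k ω - lamdag‖ ^ 2 ∂P) :=
    (Finset.sum_range_sub (fun k => ∫ ω, ‖lamk n k ω - lamdag‖ ^ 2 ∂P) m).symm
  have hsum : ∑ k ∈ Finset.range m, ((∫ ω, ‖lamk n (k + 1) ω - lamdag‖ ^ 2 ∂P)
        - ∫ ω, ‖lamk n k ω - lamdag‖ ^ 2 ∂P)
      ≤ ∑ k ∈ Finset.range m, (-(2 * γ₁ / (N : ℝ)) * ∫ ω, ‖xk n k ω - xdag‖ ^ 2 ∂P +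
          (2 * γ₁ ^ 2 / (N : ℝ)) * ∫ ω, ‖stackOp A (xk n k ω) - y‖ ^ 2 ∂P +
          (2 * γ₁ ^ 2 / (N : ℝ)) * ∫ ω, ‖stackOp A (x n ω) - y‖ ^ 2 ∂P) :=
    Finset.sum_le_sum fun k hk => step k (Finset.mem_range.mp hk)
  have hsplit : ∑ k ∈ Finset.range m, (-(2 * γ₁ / (N : ℝ)) * ∫ ω, ‖xk n k ω - xdag‖ ^ 2 ∂P +
        (2 * γ₁ ^ 2 / (N : ℝ)) * ∫ ω, ‖stackOp A (xk n k ω) - y‖ ^ 2 ∂P +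
        (2 * γ₁ ^ 2 / (N : ℝ)) * ∫ ω, ‖stackOp A (x n ω) - y‖ ^ 2 ∂P)
      = -(2 * γ₁ / (N : ℝ)) * ∑ k ∈ Finset.range m, ∫ ω, ‖xk n k ω - xdag‖ ^ 2 ∂P +
        (2 * γ₁ ^ 2 / (N : ℝ)) * ∑ k ∈ Finset.range m, ∫ ω, ‖stackOp A (xk n k ω) - y‖ ^ 2 ∂P +
        (m : ℝ) * ((2 * γ₁ ^ 2 / (N : ℝ)) * ∫ ω, ‖stackOp A (x n ω) - y‖ ^ 2 ∂P) := by
    rw [Finset.sum_add_distrib, Finset.sum_add_distrib, ← Finset.mul_sum, ← Finset.mul_sum,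
      Finset.sum_const, Finset.card_range, nsmul_eq_mul]
  have hring : (γ₀ ^ 2 + 2 * (m : ℝ) * γ₁ ^ 2 / (N : ℝ)) * ∫ ω, ‖stackOp A (x n ω) - y‖ ^ 2 ∂P
      = γ₀ ^ 2 * (∫ ω, ‖stackOp A (x n ω) - y‖ ^ 2 ∂P)
        + (m : ℝ) * ((2 * γ₁ ^ 2 / (N : ℝ)) * ∫ ω, ‖stackOp A (x n ω) - y‖ ^ 2 ∂P) := by
    ring
  linarith [hEnd, htel, hsum, hsplit, step0, hring]
end
end

section
/- If i ∈ {1,…,N} is chosen uniformly at random and μ ∈ Y = Y₁×⋯×Y_N is defined by μ_j = (1/N)·r_j for j ≠ i and μ_i = s_i + (1/N)·r_i, where r = A z - y and s_i = A_i w - A_i z' for fixed vectors, then E[‖μ‖²] ≤ (2/N)‖A x_n - y‖² + (2/N)‖A x_{n,k} - y‖² in the setting r = A x_n - y, s_{i} = A_i(x_{n,k} - x_n). -/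
open MeasureTheory ProbabilityTheory Filter

noncomputable section

/-- second-moment bound for the dual SVRG direction `μ`. -/
theorem svrg_dual_direction_second_moment_bound
    {Ω : Type*} [MeasurableSpace Ω] (P : Measure Ω) [IsProbabilityMeasure P]
    {X : Type*} [NormedAddCommGroup X] [InnerProductSpace ℝ X] [CompleteSpace X]
    {N : ℕ} (hN : 0 < N) {Y : Fin N → Type*}
    [∀ i, NormedAddCommGroup (Y i)] [∀ i, InnerProductSpace ℝ (Y i)]
    [∀ i, CompleteSpace (Y i)]
    (A : ∀ i, X →L[ℝ] Y i)
    -- the uniformly distributed random index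
    (i : Ω → Fin N) (himeas : Measurable i)
    (hunif : ∀ j, P {ω | i ω = j} = 1 / N)
    -- exact data and fixed points
    (y : PiLp 2 Y) (xdag : X) (hsol : stackOp A xdag = y) (xn xnk : X)
    -- the dual SVRG direction
    (μ : Ω → PiLp 2 Y)
    (hμ : ∀ ω j, μ ω j =
      (if j = i ω then A j xnk - A j xn else 0) + ((N : ℝ)⁻¹) • (A j xn - y j)) :
    ∫ ω, ‖μ ω‖ ^ 2 ∂P ≤
      (2 / (N : ℝ)) * ‖stackOp A xn - y‖ ^ 2 +
        (2 / (N : ℝ)) * ‖stackOp A xnk - y‖ ^ 2 := by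
  classical
  set t : ℝ := (N : ℝ)⁻¹ with ht
  have hNpos : (0 : ℝ) < N := by exact_mod_cast hN
  have ht0 : 0 < t := by positivity
  have ht1 : t ≤ 1 := by
    rw [ht, inv_le_one_iff₀]
    right; exact_mod_cast hN
  set r : ∀ j, Y j := fun j => A j xn - y j with hr
  set q : ∀ j, Y j := fun j => A j xnk - y j with hq
  set c : ℝ := 1 - t with hc
  set R : ℝ := ∑ k, ‖r k‖ ^ 2 with hR
  set Q : ℝ := ∑ k, ‖q k‖ ^ 2 with hQ
  have hR0 : 0 ≤ R := Finset.sum_nonneg fun k _ => by positivity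
  have hQ0 : 0 ≤ Q := Finset.sum_nonneg fun k _ => by positivity
  have hRnorm : ‖stackOp A xn - y‖ ^ 2 = R := by
    rw [PiLp.norm_sq_eq_of_L2]; rfl
  have hQnorm : ‖stackOp A xnk - y‖ ^ 2 = Q := by
    rw [PiLp.norm_sq_eq_of_L2]; rfl
  set g : Fin N → ℝ := fun j => 2 * ‖q j‖ ^ 2 + 2 * c ^ 2 * ‖r j‖ ^ 2 + t ^ 2 * R with hg
  -- pointwise bound
  have hpt : ∀ ω, ‖μ ω‖ ^ 2 ≤ g (i ω) := by
    intro ω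
    rw [PiLp.norm_sq_eq_of_L2]
    have hcomp : ∀ k, ‖μ ω k‖ ^ 2 ≤
        (if k = i ω then 2 * ‖q k‖ ^ 2 + 2 * c ^ 2 * ‖r k‖ ^ 2 else 0) + t ^ 2 * ‖r k‖ ^ 2 := by
      intro k
      by_cases hk : k = i ω
      · have hval : μ ω k = q k - c • r k := by
          rw [hμ, if_pos hk, hr, hq, hc, sub_smul, one_smul]
          module
        rw [hval, if_pos hk]
        have h1 : ‖q k - c • r k‖ ≤ ‖q k‖ + |c| * ‖r k‖ := by
          calc ‖q k - c • r k‖ ≤ ‖q k‖ + ‖c • r k‖ := norm_sub_le _ _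
          _ = ‖q k‖ + |c| * ‖r k‖ := by rw [norm_smul, Real.norm_eq_abs]
        have h2 : 0 ≤ ‖q k - c • r k‖ := norm_nonneg _
        have h3 : 0 ≤ ‖q k‖ := norm_nonneg _
        have h4 : 0 ≤ ‖r k‖ := norm_nonneg _
        have h5 : |c| ^ 2 = c ^ 2 := sq_abs c
        nlinarith [sq_nonneg (‖q k‖ - |c| * ‖r k‖), sq_nonneg (t * ‖r k‖)]
      · have hval : μ ω k = t • r k := by
          rw [hμ, if_neg hk, hr, zero_add, ht]
        rw [hval, if_neg hk, zero_add, norm_smul, Real.norm_eq_abs,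
          abs_of_nonneg ht0.le, mul_pow]
    calc ∑ k, ‖μ ω k‖ ^ 2
        ≤ ∑ k, ((if k = i ω then 2 * ‖q k‖ ^ 2 + 2 * c ^ 2 * ‖r k‖ ^ 2 else 0)
            + t ^ 2 * ‖r k‖ ^ 2) := Finset.sum_le_sum fun k _ => hcomp k
      _ = g (i ω) := by
          rw [Finset.sum_add_distrib, Finset.sum_ite_eq' Finset.univ (i ω)
            (fun k => 2 * ‖q k‖ ^ 2 + 2 * c ^ 2 * ‖r k‖ ^ 2), ← Finset.mul_sum]
          simp [hg, hR]
  -- g ∘ i as a sum of indicators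
  have hgi : (fun ω => g (i ω)) =
      fun ω => ∑ j, (i ⁻¹' {j}).indicator (fun _ => g j) ω := by
    funext ω
    rw [Finset.sum_eq_single (i ω)]
    · rw [Set.indicator_of_mem (by simp : ω ∈ i ⁻¹' {i ω})]
    · intro j _ hj
      exact Set.indicator_of_notMem (by simp [Ne.symm hj]) _
    · simp
  have hmeas : ∀ j : Fin N, MeasurableSet (i ⁻¹' {j}) :=
    fun j => himeas (measurableSet_singleton j)
  have hIntg : Integrable (fun ω => g (i ω)) P := by
    rw [hgi]
    exact integrable_finset_sum _ fun j _ =>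
      (integrable_const (g j)).indicator (hmeas j)
  have hPval : ∀ j : Fin N, (P (i ⁻¹' {j})).toReal = t := by
    intro j
    have : i ⁻¹' {j} = {ω | i ω = j} := by ext ω; simp
    rw [this, hunif j, ht]
    simp [ENNReal.toReal_div]
  have hint : ∫ ω, g (i ω) ∂P = t * ∑ j, g j := by
    rw [hgi, integral_finset_sum _ (fun j _ => (integrable_const (g j)).indicator (hmeas j))]
    rw [Finset.mul_sum]
    refine Finset.sum_congr rfl fun j _ => ?_
    rw [integral_indicator_const _ (hmeas j), Measure.real, hPval j, smul_eq_mul]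
  have hsum : ∑ j, g j = 2 * Q + 2 * c ^ 2 * R + (N : ℝ) * (t ^ 2 * R) := by
    simp only [hg, Finset.sum_add_distrib, ← Finset.mul_sum, ← hQ, ← hR,
      Finset.sum_const, Finset.card_univ, Fintype.card_fin, nsmul_eq_mul]
    ring
  have hmono : ∫ ω, ‖μ ω‖ ^ 2 ∂P ≤ ∫ ω, g (i ω) ∂P := by
    refine integral_mono_of_nonneg ?_ hIntg ?_
    · exact Filter.Eventually.of_forall fun ω => by positivity
    · exact Filter.Eventually.of_forall hpt
  have hNt : (N : ℝ) * t = 1 := by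
    rw [ht]; field_simp
  have hNtR : (N : ℝ) * (t ^ 2 * R) = t * R := by
    have : (N : ℝ) * (t ^ 2 * R) = ((N : ℝ) * t) * (t * R) := by ring
    rw [this, hNt, one_mul]
  have h2N : (2 : ℝ) / N = 2 * t := by
    rw [ht]; ring
  have hkey : t * (2 * Q + 2 * c ^ 2 * R + (N : ℝ) * (t ^ 2 * R)) ≤ 2 * t * R + 2 * t * Q := by
    rw [hNtR, hc]
    have hexp : 2 * t * R + 2 * t * Q - t * (2 * Q + 2 * (1 - t) ^ 2 * R + t * R) =
        (t * t * R) * (3 - 2 * t) := by ring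
    have h1 : 0 ≤ t * t * R := by positivity
    have h2 : (0 : ℝ) ≤ 3 - 2 * t := by linarith
    have h3 : 0 ≤ (t * t * R) * (3 - 2 * t) := mul_nonneg h1 h2
    linarith [hexp ▸ h3]
  have hfinal : 2 * t * R + 2 * t * Q =
      (2 / (N : ℝ)) * ‖stackOp A xn - y‖ ^ 2 + (2 / (N : ℝ)) * ‖stackOp A xnk - y‖ ^ 2 := by
    rw [hRnorm, hQnorm, h2N]
  calc ∫ ω, ‖μ ω‖ ^ 2 ∂P ≤ t * ∑ j, g j := hmono.trans_eq hint
    _ = t * (2 * Q + 2 * c ^ 2 * R + (N : ℝ) * (t ^ 2 * R)) := by rw [hsum]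
    _ ≤ 2 * t * R + 2 * t * Q := hkey
    _ = _ := hfinal
end
end
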